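/- Threshold greedy optimality under a binding budget constraint: let μ ∈ [0,n]^m be a fractional strategy with Σ_j c_j(μ_j) = B and Σ_j c_j(μ_j) ≤ T·Σ_j v_j(μ_j), and suppose there exists t > 0 such that for every platform j and every integer s ∈ {1,…,n}: if s − 1 < μ_j then MC_j(s) ≤ t, and if s > μ_j then MC_j(s) ≥ t. Then every fractional strategy μ^a ∈ [0,n]^m with Σ_j c_j(μ^a_j) ≤ B satisfies Σ_j v_j(μ^a_j) ≤ Σ_j v_j(μ_j). -/
import Mathlib

noncomputable def MC (c v : ℕ → ℝ) (μ : ℕ) : ℝ :=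
  (c μ - c (μ - 1)) / (v μ - v (μ - 1))

noncomputable def interp (f : ℕ → ℝ) (x : ℝ) : ℝ :=
  f ⌊x⌋₊ + (x - ⌊x⌋₊) * (f (⌊x⌋₊ + 1) - f ⌊x⌋₊)

lemma chain_mono (g : ℕ → ℝ) (a b : ℕ) (hab : a ≤ b)
    (h : ∀ s, a ≤ s → s < b → g s ≤ g (s + 1)) : g a ≤ g b := by
  induction b, hab using Nat.le_induction with
  | base => exact le_rfl
  | succ b hab ih =>
      exact (ih fun s hs hsb => h s hs (hsb.trans b.lt_succ_self)).trans
        (h b hab b.lt_succ_self)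

lemma interp_mono (g : ℕ → ℝ) (n : ℕ) (μ : ℝ)
    (hstep : ∀ s : ℕ, s < n → (s : ℝ) < μ → g s ≤ g (s + 1))
    {x y : ℝ} (hx : 0 ≤ x) (hxy : x ≤ y) (hyμ : y ≤ μ) (hyn : y ≤ (n : ℝ)) :
    interp g x ≤ interp g y := by
  have hy0 : 0 ≤ y := hx.trans hxy
  set a := ⌊x⌋₊ with ha
  set b := ⌊y⌋₊ with hb
  have hax : (a : ℝ) ≤ x := Nat.floor_le hx
  have hby : (b : ℝ) ≤ y := Nat.floor_le hy0
  have hxa1 : x < a + 1 := Nat.lt_floor_add_one x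
  have hyb1 : y < b + 1 := Nat.lt_floor_add_one y
  have hab : a ≤ b := Nat.floor_le_floor hxy
  have hbn : b ≤ n := by
    have : (b : ℝ) ≤ n := hby.trans hyn
    exact_mod_cast this
  rcases eq_or_lt_of_le hab with heq | hlt
  · -- same segment
    rcases eq_or_lt_of_le hxy with hxyeq | hxylt
    · rw [hxyeq]
    · have han : a < n := by
        have : (a : ℝ) < n := lt_of_le_of_lt hax (lt_of_lt_of_le hxylt hyn)
        exact_mod_cast this
      have haμ : (a : ℝ) < μ := lt_of_le_of_lt hax (lt_of_lt_of_le hxylt hyμ)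
      have hg : g a ≤ g (a + 1) := hstep a han haμ
      simp only [interp, ← ha, ← hb, ← heq]
      nlinarith [hxylt]
  · -- a < b
    have han : a < n := lt_of_lt_of_le hlt hbn
    have haμ : (a : ℝ) < μ := by
      have h1 : (a : ℝ) + 1 ≤ b := by exact_mod_cast hlt
      linarith [hby.trans hyμ]
    have hg1 : g a ≤ g (a + 1) := hstep a han haμ
    have h1 : interp g x ≤ g (a + 1) := by
      simp only [interp, ← ha]
      nlinarith
    have h2 : g (a + 1) ≤ g b := by
      apply chain_mono g (a + 1) b hlt
      intro s hs hsb
      apply hstep s (lt_of_lt_of_le hsb hbn)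
      have : (s : ℝ) < b := by exact_mod_cast hsb
      linarith [hby.trans hyμ]
    have h3 : g b ≤ interp g y := by
      rcases eq_or_lt_of_le hby with hbyeq | hbylt
      · simp only [interp, ← hb, ← hbyeq]
        ring_nf
        simp
      · have hbn' : b < n := by
          have : (b : ℝ) < n := lt_of_lt_of_le hbylt hyn
          exact_mod_cast this
        have hbμ : (b : ℝ) < μ := lt_of_lt_of_le hbylt hyμ
        have hg : g b ≤ g (b + 1) := hstep b hbn' hbμ
        simp only [interp, ← hb]
        nlinarith
    linarith

lemma interp_anti (g : ℕ → ℝ) (n : ℕ) (μ : ℝ)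
    (hstep : ∀ s : ℕ, s < n → μ < (s : ℝ) + 1 → g (s + 1) ≤ g s)
    {x y : ℝ} (hx : 0 ≤ x) (hμx : μ ≤ x) (hxy : x ≤ y) (hyn : y ≤ (n : ℝ)) :
    interp g y ≤ interp g x := by
  have hy0 : 0 ≤ y := hx.trans hxy
  set a := ⌊x⌋₊ with ha
  set b := ⌊y⌋₊ with hb
  have hax : (a : ℝ) ≤ x := Nat.floor_le hx
  have hby : (b : ℝ) ≤ y := Nat.floor_le hy0
  have hxa1 : x < a + 1 := Nat.lt_floor_add_one x
  have hyb1 : y < b + 1 := Nat.lt_floor_add_one y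
  have hab : a ≤ b := Nat.floor_le_floor hxy
  have hbn : b ≤ n := by
    have : (b : ℝ) ≤ n := hby.trans hyn
    exact_mod_cast this
  have hμa1 : μ < (a : ℝ) + 1 := lt_of_le_of_lt hμx hxa1
  rcases eq_or_lt_of_le hab with heq | hlt
  · rcases eq_or_lt_of_le hxy with hxyeq | hxylt
    · rw [hxyeq]
    · have han : a < n := by
        have : (a : ℝ) < n := lt_of_le_of_lt hax (lt_of_lt_of_le hxylt hyn)
        exact_mod_cast this
      have hg : g (a + 1) ≤ g a := hstep a han hμa1
      simp only [interp, ← ha, ← hb, ← heq]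
      nlinarith [hxylt]
  · have han : a < n := lt_of_lt_of_le hlt hbn
    have hg1 : g (a + 1) ≤ g a := hstep a han hμa1
    have h1 : g (a + 1) ≤ interp g x := by
      simp only [interp, ← ha]
      nlinarith
    have h2 : g b ≤ g (a + 1) := by
      have := chain_mono (fun s => -g s) (a + 1) b hlt ?_
      · simpa using this
      · intro s hs hsb
        have hsans : μ < (s : ℝ) + 1 := by
          have : (a : ℝ) + 1 ≤ s := by exact_mod_cast hs
          linarith
        simpa using hstep s (lt_of_lt_of_le hsb hbn) hsans
    have h3 : interp g y ≤ g b := by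
      rcases eq_or_lt_of_le hby with hbyeq | hbylt
      · simp only [interp, ← hb, ← hbyeq]
        ring_nf
        simp
      · have hbn' : b < n := by
          have : (b : ℝ) < n := lt_of_lt_of_le hbylt hyn
          exact_mod_cast this
        have hμb1 : μ < (b : ℝ) + 1 := by
          have : (a : ℝ) + 1 ≤ b := by exact_mod_cast hlt
          linarith
        have hg : g (b + 1) ≤ g b := hstep b hbn' hμb1
        simp only [interp, ← hb]
        nlinarith
    linarith

theorem threshold_greedy_optimal_budget_binding
    (m n : ℕ) (c v : Fin m → ℕ → ℝ)
    (hc0 : ∀ j, c j 0 = 0) (hv0 : ∀ j, v j 0 = 0)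
    (hc : ∀ j, ∀ s < n, c j s < c j (s + 1)) (hv : ∀ j, ∀ s < n, v j s < v j (s + 1))
    (hmono : ∀ j, ∀ s, 1 ≤ s → s < n → MC (c j) (v j) s ≤ MC (c j) (v j) (s + 1))
    (B T : ℝ) (hB : 0 ≤ B) (hT : 0 < T)
    (μ : Fin m → ℝ) (hbox : ∀ j, 0 ≤ μ j ∧ μ j ≤ n)
    (hbind : ∑ j, interp (c j) (μ j) = B)
    (hros : ∑ j, interp (c j) (μ j) ≤ T * ∑ j, interp (v j) (μ j))
    (t : ℝ) (ht : 0 < t)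
    (hthresh : ∀ j, ∀ s : ℕ, 1 ≤ s → s ≤ n →
      (((s : ℝ) - 1 < μ j → MC (c j) (v j) s ≤ t) ∧
        (μ j < (s : ℝ) → t ≤ MC (c j) (v j) s)))
    (μa : Fin m → ℝ) (hboxa : ∀ j, 0 ≤ μa j ∧ μa j ≤ n)
    (hBa : ∑ j, interp (c j) (μa j) ≤ B) :
    ∑ j, interp (v j) (μa j) ≤ ∑ j, interp (v j) (μ j) := by
  have key : ∀ j, t * interp (v j) (μa j) - interp (c j) (μa j) ≤
      t * interp (v j) (μ j) - interp (c j) (μ j) := by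
    intro j
    set g : ℕ → ℝ := fun k => t * v j k - c j k with hgdef
    have hg : ∀ x : ℝ, interp g x = t * interp (v j) x - interp (c j) x := by
      intro x; simp only [interp, hgdef]; ring
    rw [← hg, ← hg]
    rcases le_total (μa j) (μ j) with h | h
    · apply interp_mono g n (μ j) ?_ (hboxa j).1 h le_rfl (hbox j).2
      intro s hs hsμ
      have hΔv : 0 < v j (s + 1) - v j s := sub_pos.2 (hv j s hs)
      have hmc := (hthresh j (s + 1) (by omega) (by omega)).1 (by push_cast; linarith)
      rw [MC, Nat.add_sub_cancel] at hmc
      rw [div_le_iff₀ hΔv] at hmc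
      simp only [hgdef]
      nlinarith
    · apply interp_anti g n (μ j) ?_ (hbox j).1 le_rfl h (hboxa j).2
      intro s hs hsμ
      have hΔv : 0 < v j (s + 1) - v j s := sub_pos.2 (hv j s hs)
      have hmc := (hthresh j (s + 1) (by omega) (by omega)).2 (by push_cast; linarith)
      rw [MC, Nat.add_sub_cancel] at hmc
      rw [le_div_iff₀ hΔv] at hmc
      simp only [hgdef]
      nlinarith
  have hsum : t * ∑ j, interp (v j) (μa j) - ∑ j, interp (c j) (μa j) ≤
      t * ∑ j, interp (v j) (μ j) - ∑ j, interp (c j) (μ j) := by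
    rw [Finset.mul_sum, Finset.mul_sum, ← Finset.sum_sub_distrib, ← Finset.sum_sub_distrib]
    exact Finset.sum_le_sum fun j _ => key j
  have : t * ∑ j, interp (v j) (μa j) ≤ t * ∑ j, interp (v j) (μ j) := by
    linarith
  exact le_of_mul_le_mul_left this ht
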